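/- Let F ⊆ ℤ be a finite nonempty set and C ⊆ ℤ a set such that every integer has a unique representation as f + c with f ∈ F, c ∈ C (a translational tiling of ℤ by F). Then C is periodic: there exists k ≥ 1 with C + k = C. -/
import Mathlib


/-- One-dimensional periodic tiling theorem: if a finite nonempty tile `F ⊆ ℤ` tiles `ℤ`
by the translation set `C` (every integer has a unique representation `f + c` with
`f ∈ F`, `c ∈ C`), then `C` is periodic. -/
theorem stmt18 (F : Finset ℤ) (hF : F.Nonempty) (C : Set ℤ)
    (htile : ∀ m : ℤ, ∃! fc : ℤ × ℤ, fc.1 ∈ F ∧ fc.2 ∈ C ∧ fc.1 + fc.2 = m) :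
    ∃ k : ℕ, 1 ≤ k ∧ ∀ x : ℤ, x ∈ C ↔ x + k ∈ C := by
  classical
  set fmin := F.min' hF with hfmin
  set fmax := F.max' hF with hfmax
  set D : ℤ := fmax - fmin with hD
  have hD0 : 0 ≤ D := by
    have := F.min'_le fmax (F.max'_mem hF)
    omega
  -- forward characterization
  have char : ∀ n : ℤ, (n ∈ C ↔ ¬ ∃ c, c ∈ C ∧ n - D ≤ c ∧ c < n ∧ n + fmin - c ∈ F) := by
    intro n
    obtain ⟨fc, hfc, huniq⟩ := htile (n + fmin)
    constructor
    · rintro hn ⟨c, hc, _, hclt, hf⟩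
      have h1 := huniq (fmin, n) ⟨F.min'_mem hF, hn, by ring⟩
      have h2 := huniq (n + fmin - c, c) ⟨hf, hc, by ring⟩
      have : n = c := congrArg Prod.snd (h1.trans h2.symm)
      omega
    · intro h
      by_contra hn
      apply h
      have h1 : fc.1 ∈ F := hfc.1
      have hle : fmin ≤ fc.1 := F.min'_le _ h1
      have hge : fc.1 ≤ fmax := F.le_max' _ h1
      have hsum : fc.1 + fc.2 = n + fmin := hfc.2.2
      have hne : fc.2 ≠ n := by
        intro heq
        exact hn (heq ▸ hfc.2.1)
      refine ⟨fc.2, hfc.2.1, by omega, by omega, ?_⟩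
      have : n + fmin - fc.2 = fc.1 := by omega
      rw [this]; exact h1
  -- backward characterization
  have charb : ∀ n : ℤ, (n ∈ C ↔ ¬ ∃ c, c ∈ C ∧ n < c ∧ c ≤ n + D ∧ n + fmax - c ∈ F) := by
    intro n
    obtain ⟨fc, hfc, huniq⟩ := htile (n + fmax)
    constructor
    · rintro hn ⟨c, hc, hclt, _, hf⟩
      have h1 := huniq (fmax, n) ⟨F.max'_mem hF, hn, by ring⟩
      have h2 := huniq (n + fmax - c, c) ⟨hf, hc, by ring⟩
      have : n = c := congrArg Prod.snd (h1.trans h2.symm)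
      omega
    · intro h
      by_contra hn
      apply h
      have h1 : fc.1 ∈ F := hfc.1
      have hle : fmin ≤ fc.1 := F.min'_le _ h1
      have hge : fc.1 ≤ fmax := F.le_max' _ h1
      have hsum : fc.1 + fc.2 = n + fmax := hfc.2.2
      have hne : fc.2 ≠ n := by
        intro heq
        exact hn (heq ▸ hfc.2.1)
      refine ⟨fc.2, hfc.2.1, by omega, by omega, ?_⟩
      have : n + fmax - fc.2 = fc.1 := by omega
      rw [this]; exact h1
  -- pigeonhole on windows
  have : DecidablePred (· ∈ C) := Classical.decPred _
  obtain ⟨n, m, hnm, hg⟩ := Finite.exists_ne_map_eq_of_infinite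
    (fun (i : ℕ) => (fun (t : Fin D.toNat) => decide ((i : ℤ) + t ∈ C)))
  wlog hlt : n < m generalizing n m
  · exact this m n hnm.symm hg.symm (by omega)
  set k : ℕ := m - n with hk
  have hk1 : 1 ≤ k := by omega
  have hmk : (m : ℤ) = (n : ℤ) + k := by
    push_cast [hk]; omega
  refine ⟨k, hk1, ?_⟩
  set p : ℤ := (n : ℤ) with hp
  -- initial window
  have H0 : ∀ i : ℤ, 0 ≤ i → i < D → ((p + i ∈ C) ↔ (p + i + k ∈ C)) := by
    intro i h0 hiD
    have hit : i.toNat < D.toNat := by omega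
    have := congrFun hg ⟨i.toNat, hit⟩
    simp only [decide_eq_decide] at this
    have hi : ((⟨i.toNat, hit⟩ : Fin D.toNat) : ℤ) = i := by simp; omega
    rw [hi] at this
    rw [hmk] at this
    have e : p + (k : ℤ) + i = p + i + k := by ring
    rw [e] at this
    exact this
  -- forward propagation step
  have hfwd : ∀ x : ℤ, (∀ c, x - D ≤ c → c < x → (c ∈ C ↔ c + (k : ℤ) ∈ C)) →
      (x ∈ C ↔ x + (k : ℤ) ∈ C) := by
    intro x hyp
    rw [char x, char (x + k)]
    apply not_congr
    constructor
    · rintro ⟨c, hc, h1, h2, h3⟩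
      refine ⟨c + k, (hyp c h1 h2).mp hc, by omega, by omega, ?_⟩
      have : x + (k : ℤ) + fmin - (c + k) = x + fmin - c := by ring
      rw [this]; exact h3
    · rintro ⟨c, hc, h1, h2, h3⟩
      refine ⟨c - k, ?_, by omega, by omega, ?_⟩
      · apply (hyp (c - k) (by omega) (by omega)).mpr
        have : c - (k : ℤ) + k = c := by ring
        rw [this]; exact hc
      · have : x + fmin - (c - k) = x + (k : ℤ) + fmin - c := by ring
        rw [this]; exact h3
  -- backward propagation step
  have hbwd : ∀ x : ℤ, (∀ c, x < c → c ≤ x + D → (c ∈ C ↔ c + (k : ℤ) ∈ C)) →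
      (x ∈ C ↔ x + (k : ℤ) ∈ C) := by
    intro x hyp
    rw [charb x, charb (x + k)]
    apply not_congr
    constructor
    · rintro ⟨c, hc, h1, h2, h3⟩
      refine ⟨c + k, (hyp c h1 h2).mp hc, by omega, by omega, ?_⟩
      have : x + (k : ℤ) + fmax - (c + k) = x + fmax - c := by ring
      rw [this]; exact h3
    · rintro ⟨c, hc, h1, h2, h3⟩
      refine ⟨c - k, ?_, by omega, by omega, ?_⟩
      · apply (hyp (c - k) (by omega) (by omega)).mpr
        have : c - (k : ℤ) + k = c := by ring
        rw [this]; exact hc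
      · have : x + fmax - (c - k) = x + (k : ℤ) + fmax - c := by ring
        rw [this]; exact h3
  -- forward induction
  have A : ∀ j : ℕ, ∀ x : ℤ, p ≤ x → x < p + D + j → (x ∈ C ↔ x + (k : ℤ) ∈ C) := by
    intro j
    induction j with
    | zero =>
      intro x hx1 hx2
      have : x = p + (x - p) := by ring
      rw [this]
      exact H0 (x - p) (by omega) (by omega)
    | succ j ih =>
      intro x hx1 hx2
      by_cases hx : x < p + D + j
      · exact ih x hx1 hx
      · exact hfwd x (fun c hc1 hc2 => ih c (by omega) (by omega))
  -- backward induction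
  have B : ∀ j : ℕ, ∀ x : ℤ, p - j ≤ x → x < p + D → (x ∈ C ↔ x + (k : ℤ) ∈ C) := by
    intro j
    induction j with
    | zero =>
      intro x hx1 hx2
      have : x = p + (x - p) := by ring
      rw [this]
      exact H0 (x - p) (by omega) (by omega)
    | succ j ih =>
      intro x hx1 hx2
      by_cases hx : p - j ≤ x
      · exact ih x hx hx2
      · exact hbwd x (fun c hc1 hc2 => ih c (by omega) (by omega))
  intro x
  rcases le_or_gt p x with h | h
  · exact A ((x - p).toNat + 1) x h (by omega)
  · exact B ((p - x).toNat) x (by omega) (by omega)
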